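/- In the hypergraph product construction, the X and Z block check matrices are orthogonal: H_X · H_Z^T = 0 over F_2, where H_X = (H_1 ⊗ I_{n_2} | I_{r_1} ⊗ H_2^T) and H_Z = (I_{n_1} ⊗ H_2 | H_1^T ⊗ I_{r_2}). -/

import Mathlib

open Matrix Kronecker

/-- Hypergraph product: the X and Z block check matrices
`H_X = (H₁ ⊗ I_{n₂} | I_{r₁} ⊗ H₂ᵀ)` and `H_Z = (I_{n₁} ⊗ H₂ | H₁ᵀ ⊗ I_{r₂})` are
orthogonal over `F₂`: `H_X · H_Zᵀ = 0`. -/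
theorem stmt_17 (r1 n1 r2 n2 : ℕ)
    (H1 : Matrix (Fin r1) (Fin n1) (ZMod 2)) (H2 : Matrix (Fin r2) (Fin n2) (ZMod 2)) :
    (Matrix.fromCols (H1 ⊗ₖ (1 : Matrix (Fin n2) (Fin n2) (ZMod 2)))
        ((1 : Matrix (Fin r1) (Fin r1) (ZMod 2)) ⊗ₖ H2ᵀ)) *
      (Matrix.fromCols ((1 : Matrix (Fin n1) (Fin n1) (ZMod 2)) ⊗ₖ H2)
        (H1ᵀ ⊗ₖ (1 : Matrix (Fin r2) (Fin r2) (ZMod 2))))ᵀ = 0 := by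
  rw [transpose_fromCols, fromCols_mul_fromRows, ← Matrix.kroneckerMap_transpose,
    ← Matrix.kroneckerMap_transpose, transpose_one, transpose_one, ← Matrix.mul_kronecker_mul,
    ← Matrix.mul_kronecker_mul, Matrix.one_mul, Matrix.mul_one, Matrix.one_mul, Matrix.mul_one,
    transpose_transpose]
  rw [← Matrix.add_kronecker]
  have : H1 + H1 = 0 := by
    ext i j
    exact CharTwo.add_self_eq_zero (R := ZMod 2) _
  rw [this, Matrix.zero_kronecker]
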